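/- If G is a class 2 graph, then for every integer k with 2 ≤ k ≤ Δ(G), G contains a subgraph that is k-critical. -/

import Mathlib

open SimpleGraph

variable {V : Type*}

/-- `c` is a proper edge coloring of `G` using colors `0, …, n-1`:
every edge gets a color `< n`, and distinct edges sharing an endpoint
receive distinct colors. -/
def IsProperEdgeColoring (G : SimpleGraph V) (n : ℕ) (c : Sym2 V → ℕ) : Prop :=
  (∀ e ∈ G.edgeSet, c e < n) ∧
    ∀ e₁ ∈ G.edgeSet, ∀ e₂ ∈ G.edgeSet, e₁ ≠ e₂ → (∃ v, v ∈ e₁ ∧ v ∈ e₂) →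
      c e₁ ≠ c e₂

/-- The edge chromatic number `χ'(G)`: the least number of colors in a proper
edge coloring of `G`. -/
noncomputable def edgeChromaticNumber (G : SimpleGraph V) : ℕ :=
  sInf {n | ∃ c, IsProperEdgeColoring G n c}

/-- The degree `d_G(v)` of a vertex. -/
noncomputable def deg (G : SimpleGraph V) (v : V) : ℕ := (G.neighborSet v).ncard

/-- The maximum vertex degree `Δ(G)`. -/
noncomputable def maxDeg (G : SimpleGraph V) : ℕ := sSup {d | ∃ v, deg G v = d}

/-- `G` is critical: it is class 2 (i.e. `χ'(G) ≠ Δ(G)`) and every proper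
subgraph `H` of `G` satisfies `χ'(H) < χ'(G)`. -/
def IsCritical (G : SimpleGraph V) : Prop :=
  edgeChromaticNumber G ≠ maxDeg G ∧
    ∀ H : G.Subgraph, H ≠ ⊤ → edgeChromaticNumber H.coe < edgeChromaticNumber G

/-- `G` is `k`-critical: critical with maximum degree `k`. -/
def IsKCritical (G : SimpleGraph V) (k : ℕ) : Prop :=
  IsCritical G ∧ maxDeg G = k


attribute [local instance] Classical.propDecidable
set_option linter.unusedSectionVars false

namespace VizingAux

/-- colorability with `n` colors -/
def EColorable (G : SimpleGraph V) (n : ℕ) : Prop := ∃ c, IsProperEdgeColoring G n c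

/-- color `a` is missing at `w` -/
def Free (G : SimpleGraph V) (c : Sym2 V → ℕ) (w : V) (a : ℕ) : Prop :=
  ∀ e ∈ G.edgeSet, w ∈ e → c e ≠ a

theorem EColorable.mono {G : SimpleGraph V} {n m : ℕ} (h : EColorable G n) (hnm : n ≤ m) :
    EColorable G m := by
  obtain ⟨c, h1, h2⟩ := h
  exact ⟨c, fun e he => lt_of_lt_of_le (h1 e he) hnm, h2⟩

section fintype
variable [Fintype V] [DecidableEq V]

theorem ecolorable_card (G : SimpleGraph V) : EColorable G G.edgeFinset.card := by
  classical
  refine ⟨fun e => G.edgeFinset.toList.idxOf e, fun e he => ?_, fun e₁ h₁ e₂ h₂ hne _ => ?_⟩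
  · rw [← Finset.length_toList]
    exact List.idxOf_lt_length_iff.2 (by simpa using he)
  · intro hEq
    exact hne ((List.idxOf_inj (by simpa using h₁)).1 hEq)

theorem ecolorable_chrom (G : SimpleGraph V) : EColorable G (edgeChromaticNumber G) :=
  Nat.sInf_mem (s := {n | ∃ c, IsProperEdgeColoring G n c}) ⟨_, ecolorable_card G⟩

theorem chrom_le_iff {G : SimpleGraph V} {n : ℕ} :
    edgeChromaticNumber G ≤ n ↔ EColorable G n := by
  constructor
  · intro h
    exact (ecolorable_chrom G).mono h
  · intro h
    exact Nat.sInf_le h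

theorem chrom_mono {K L : SimpleGraph V} (h : K ≤ L) :
    edgeChromaticNumber K ≤ edgeChromaticNumber L := by
  rw [chrom_le_iff]
  obtain ⟨c, h1, h2⟩ := ecolorable_chrom L
  exact ⟨c, fun e he => h1 e (edgeSet_mono h he),
    fun e₁ h₁ e₂ h₂ hne hsh => h2 e₁ (edgeSet_mono h h₁) e₂ (edgeSet_mono h h₂) hne hsh⟩

theorem degree_add_free_le {G : SimpleGraph V} {n : ℕ} {c : Sym2 V → ℕ}
    (hc : IsProperEdgeColoring G n c) (w : V) (S : Finset ℕ) (hS : S ⊆ Finset.range n)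
    (hfree : ∀ a ∈ S, Free G c w a) : G.degree w + S.card ≤ n := by
  classical
  have hinj : Set.InjOn (fun u => c s(w, u)) (G.neighborFinset w) := by
    intro u₁ hu₁ u₂ hu₂ hEq
    by_contra hne
    refine hc.2 s(w, u₁) ?_ s(w, u₂) ?_ ?_ ⟨w, by simp, by simp⟩ hEq
    · simpa using (G.mem_neighborFinset w u₁).1 hu₁
    · simpa using (G.mem_neighborFinset w u₂).1 hu₂
    · intro hEq2
      exact hne (Sym2.congr_right.1 hEq2)
  have himg : (G.neighborFinset w).image (fun u => c s(w, u)) ⊆ Finset.range n \ S := by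
    intro a ha
    obtain ⟨u, hu, rfl⟩ := Finset.mem_image.1 ha
    have hadj : G.Adj w u := (G.mem_neighborFinset w u).1 hu
    refine Finset.mem_sdiff.2 ⟨Finset.mem_range.2 (hc.1 _ (by simpa using hadj)), fun hmem => ?_⟩
    exact hfree _ hmem s(w, u) (by simpa using hadj) (by simp) rfl
  have h1 : G.degree w = ((G.neighborFinset w).image (fun u => c s(w, u))).card := by
    rw [Finset.card_image_of_injOn hinj, degree]
  have h2 := Finset.card_le_card himg
  rw [Finset.card_sdiff_of_subset hS, Finset.card_range] at h2
  have h3 := Finset.card_le_card hS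
  rw [Finset.card_range] at h3
  omega

theorem exists_free {G : SimpleGraph V} {n : ℕ} {c : Sym2 V → ℕ}
    (hc : IsProperEdgeColoring G n c) {w : V} (hd : G.degree w < n) :
    ∃ a, a < n ∧ Free G c w a := by
  classical
  have himg : (G.neighborFinset w).image (fun u => c s(w, u)) ⊆ Finset.range n := by
    intro a ha
    obtain ⟨u, hu, rfl⟩ := Finset.mem_image.1 ha
    exact Finset.mem_range.2 (hc.1 _ (by simpa using (G.mem_neighborFinset w u).1 hu))
  have hcard : ((G.neighborFinset w).image (fun u => c s(w, u))).card < (Finset.range n).card := by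
    calc ((G.neighborFinset w).image (fun u => c s(w, u))).card ≤ G.degree w :=
          Finset.card_image_le
    _ < n := hd
    _ = (Finset.range n).card := (Finset.card_range n).symm
  have hpos : 0 < ((Finset.range n) \ ((G.neighborFinset w).image (fun u => c s(w, u)))).card := by
    rw [Finset.card_sdiff_of_subset himg, Finset.card_range]
    rw [Finset.card_range] at hcard
    omega
  obtain ⟨a, haa⟩ := Finset.card_pos.1 hpos
  obtain ⟨ha, hna⟩ := Finset.mem_sdiff.1 haa
  refine ⟨a, Finset.mem_range.1 ha, fun e he hwe hce => hna ?_⟩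
  have hsp := Sym2.other_spec hwe
  have hadj : G.Adj w (Sym2.Mem.other hwe) := by rw [← mem_edgeSet, hsp]; exact he
  refine Finset.mem_image.2 ⟨Sym2.Mem.other hwe, (G.mem_neighborFinset w _).2 hadj, ?_⟩
  rw [hsp, hce]

theorem deg_eq_degree (G : SimpleGraph V) (v : V) : deg G v = G.degree v := by
  classical
  rw [deg, ← card_neighborFinset_eq_degree, neighborFinset_def, Set.ncard_eq_toFinset_card']

theorem bddAbove_degSet (G : SimpleGraph V) : BddAbove {d | ∃ v, deg G v = d} := by
  have : {d | ∃ v, deg G v = d} = Set.range (deg G) := rfl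
  rw [this]
  exact (Set.finite_range _).bddAbove

theorem deg_le_maxDeg (G : SimpleGraph V) (v : V) : deg G v ≤ maxDeg G :=
  le_csSup (bddAbove_degSet G) ⟨v, rfl⟩

theorem maxDeg_le {G : SimpleGraph V} {m : ℕ} (h : ∀ v, deg G v ≤ m) : maxDeg G ≤ m := by
  rcases isEmpty_or_nonempty V with hV | hV
  · have : {d | ∃ v, deg G v = d} = ∅ := by
      ext d; simp only [Set.mem_setOf_eq, Set.mem_empty_iff_false, iff_false]
      rintro ⟨v, -⟩; exact hV.false v
    rw [maxDeg, this, csSup_empty]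
    exact Nat.zero_le m
  · apply csSup_le
    · exact (⟨deg G Classical.ofNonempty, ⟨_, rfl⟩⟩ : {d | ∃ v, deg G v = d}.Nonempty)
    · rintro d ⟨v, rfl⟩; exact h v

theorem exists_deg_eq_maxDeg [Nonempty V] (G : SimpleGraph V) : ∃ v, deg G v = maxDeg G :=
  Nat.sSup_mem (⟨deg G Classical.ofNonempty, ⟨_, rfl⟩⟩ : {d | ∃ v, deg G v = d}.Nonempty)
    (bddAbove_degSet G)

theorem deg_mono {K L : SimpleGraph V} (h : K ≤ L) (v : V) : deg K v ≤ deg L v := by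
  apply Set.ncard_le_ncard _ (L.neighborSet v).toFinite
  intro u hu; exact h hu

theorem maxDeg_mono {K L : SimpleGraph V} (h : K ≤ L) : maxDeg K ≤ maxDeg L :=
  maxDeg_le fun v => le_trans (deg_mono h v) (deg_le_maxDeg L v)

theorem maxDeg_le_of_ecolorable {G : SimpleGraph V} {n : ℕ} (h : EColorable G n) :
    maxDeg G ≤ n := by
  obtain ⟨c, hc⟩ := h
  apply maxDeg_le
  intro v
  have := degree_add_free_le hc v ∅ (by simp) (by simp)
  rw [deg_eq_degree]
  simpa using this

theorem maxDeg_le_chrom (G : SimpleGraph V) : maxDeg G ≤ edgeChromaticNumber G :=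
  maxDeg_le_of_ecolorable (ecolorable_chrom G)

end fintype
end VizingAux

-- Batch 2 (appended to a.lean content for testing)
namespace VizingAux
attribute [local instance] Classical.propDecidable
set_option linter.unusedSectionVars false

theorem ecolorable_of_edgeSet_empty {G : SimpleGraph V} (h : G.edgeSet = ∅) (n : ℕ) :
    EColorable G n := by
  refine ⟨fun _ => 0, fun e he => ?_, fun e₁ h₁ e₂ h₂ _ _ => ?_⟩
  · rw [h] at he; exact absurd he (Set.notMem_empty e)
  · rw [h] at h₁; exact absurd h₁ (Set.notMem_empty e₁)

theorem mem_deleteEdges_edgeSet {G : SimpleGraph V} {s : Set (Sym2 V)} {e : Sym2 V}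
    (he : e ∈ G.edgeSet) (hs : e ∉ s) : e ∈ (G.deleteEdges s).edgeSet := by
  rw [edgeSet_deleteEdges]; exact ⟨he, hs⟩

section fintype
variable [Fintype V] [DecidableEq V]

theorem chrom_le_deleteEdges_matching (G : SimpleGraph V) (M : Set (Sym2 V))
    (hM : ∀ e₁ ∈ M, ∀ e₂ ∈ M, e₁ ≠ e₂ → ¬ ∃ v, v ∈ e₁ ∧ v ∈ e₂) :
    edgeChromaticNumber G ≤ edgeChromaticNumber (G.deleteEdges M) + 1 := by
  rw [chrom_le_iff]
  obtain ⟨c, h1, h2⟩ := ecolorable_chrom (G.deleteEdges M)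
  set n := edgeChromaticNumber (G.deleteEdges M) with hn
  refine ⟨fun e => if e ∈ M then n else c e, ?_, ?_⟩
  · intro e he
    by_cases hm : e ∈ M
    · simp [hm]
    · simp only [hm, if_false]
      exact lt_trans (h1 e (mem_deleteEdges_edgeSet he hm)) (Nat.lt_succ_self n)
  · intro e₁ he₁ e₂ he₂ hne hsh
    by_cases m1 : e₁ ∈ M <;> by_cases m2 : e₂ ∈ M
    · exact absurd hsh (hM e₁ m1 e₂ m2 hne)
    · simp only [m1, m2, if_true, if_false]
      exact (Nat.ne_of_lt (h1 e₂ (mem_deleteEdges_edgeSet he₂ m2))).symm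
    · simp only [m1, m2, if_true, if_false]
      exact Nat.ne_of_lt (h1 e₁ (mem_deleteEdges_edgeSet he₁ m1))
    · simp only [m1, m2, if_false]
      exact h2 e₁ (mem_deleteEdges_edgeSet he₁ m1) e₂ (mem_deleteEdges_edgeSet he₂ m2) hne hsh

theorem chrom_le_deleteEdges_single (G : SimpleGraph V) (e : Sym2 V) :
    edgeChromaticNumber G ≤ edgeChromaticNumber (G.deleteEdges {e}) + 1 := by
  apply chrom_le_deleteEdges_matching
  intro e₁ he₁ e₂ he₂ hne
  rw [Set.mem_singleton_iff] at he₁ he₂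
  exact absurd (he₁.trans he₂.symm) hne

end fintype

theorem ecolorable_extend {K : SimpleGraph V} {X y : V} (hadj : K.Adj X y) {n : ℕ}
    {c : Sym2 V → ℕ} (hc : IsProperEdgeColoring (K.deleteEdges {s(X, y)}) n c)
    {a : ℕ} (ha : a < n) (hX : Free (K.deleteEdges {s(X, y)}) c X a)
    (hy : Free (K.deleteEdges {s(X, y)}) c y a) : EColorable K n := by
  classical
  refine ⟨fun e => if e = s(X, y) then a else c e, ?_, ?_⟩
  · intro e he
    by_cases hm : e = s(X, y)
    · simp [hm, ha]
    · simp only [hm, if_false]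
      exact hc.1 e (mem_deleteEdges_edgeSet he (by simpa using hm))
  · intro e₁ he₁ e₂ he₂ hne hsh
    by_cases m1 : e₁ = s(X, y) <;> by_cases m2 : e₂ = s(X, y)
    · exact absurd (m1.trans m2.symm) hne
    · simp only [m1, m2, if_true, if_false]
      obtain ⟨v, hv1, hv2⟩ := hsh
      rw [m1, Sym2.mem_iff] at hv1
      have he₂' := mem_deleteEdges_edgeSet (s := {s(X, y)}) he₂ (by simpa using m2)
      rcases hv1 with rfl | rfl
      · exact fun hh => hX e₂ he₂' hv2 hh.symm
      · exact fun hh => hy e₂ he₂' hv2 hh.symm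
    · simp only [m1, m2, if_true, if_false]
      obtain ⟨v, hv1, hv2⟩ := hsh
      rw [m2, Sym2.mem_iff] at hv2
      have he₁' := mem_deleteEdges_edgeSet (s := {s(X, y)}) he₁ (by simpa using m1)
      rcases hv2 with rfl | rfl
      · exact fun hh => hX e₁ he₁' hv1 hh
      · exact fun hh => hy e₁ he₁' hv1 hh
    · simp only [m1, m2, if_false]
      exact hc.2 e₁ (mem_deleteEdges_edgeSet he₁ (by simpa using m1)) e₂
        (mem_deleteEdges_edgeSet he₂ (by simpa using m2)) hne hsh

theorem edgeSet_nonempty_of_not_ecolorable {G : SimpleGraph V} {n : ℕ}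
    (h : ¬ EColorable G n) : G.edgeSet.Nonempty := by
  by_contra hne
  rw [Set.not_nonempty_iff_eq_empty] at hne
  exact h (ecolorable_of_edgeSet_empty hne n)

end VizingAux

-- Batch 3: Kempe machinery
namespace VizingAux
attribute [local instance] Classical.propDecidable
set_option linter.unusedSectionVars false
set_option maxHeartbeats 1000000

/-- the `(a,b)`-Kempe subgraph -/
def kg (G' : SimpleGraph V) (c : Sym2 V → ℕ) (a b : ℕ) : SimpleGraph V where
  Adj x y := G'.Adj x y ∧ (c s(x, y) = a ∨ c s(x, y) = b)
  symm := by
    constructor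
    intro x y ⟨h1, h2⟩
    rw [Sym2.eq_swap] at h2
    exact ⟨h1.symm, h2⟩
  loopless := ⟨fun x ⟨h, _⟩ => G'.irrefl h⟩

/-- swap colors `a,b` on the component of `X` -/
noncomputable def kswap (G' : SimpleGraph V) (c : Sym2 V → ℕ) (a b : ℕ) (X : V) :
    Sym2 V → ℕ := fun e =>
  if e ∈ (kg G' c a b).edgeSet ∧ (∃ v ∈ e, (kg G' c a b).Reachable X v)
  then (if c e = a then b else a) else c e

variable {G' : SimpleGraph V} {c : Sym2 V → ℕ} {n a b : ℕ} {X : V}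

theorem mem_kg_edgeSet {e : Sym2 V} :
    e ∈ (kg G' c a b).edgeSet ↔ e ∈ G'.edgeSet ∧ (c e = a ∨ c e = b) := by
  induction e using Sym2.ind with
  | _ x y => rw [mem_edgeSet, mem_edgeSet]; rfl

theorem kg_reach_all {e : Sym2 V} (he : e ∈ (kg G' c a b).edgeSet)
    (hr : ∃ v ∈ e, (kg G' c a b).Reachable X v) {w : V} (hw : w ∈ e) :
    (kg G' c a b).Reachable X w := by
  induction e using Sym2.ind with
  | _ x y =>
    rw [mem_edgeSet] at he
    obtain ⟨v, hv, hrv⟩ := hr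
    rw [Sym2.mem_iff] at hv hw
    rcases hv with rfl | rfl <;> rcases hw with rfl | rfl
    · exact hrv
    · exact hrv.trans he.reachable
    · exact hrv.trans he.symm.reachable
    · exact hrv

theorem kswap_eq_at_unreach {w : V} {e : Sym2 V} (hw : w ∈ e)
    (hnr : ¬ (kg G' c a b).Reachable X w) : kswap G' c a b X e = c e := by
  rw [kswap, if_neg]
  rintro ⟨hkg, hr⟩
  exact hnr (kg_reach_all hkg hr hw)

theorem kswap_eq_of_not_ab {e : Sym2 V} (h1 : c e ≠ a) (h2 : c e ≠ b) :
    kswap G' c a b X e = c e := by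
  rw [kswap, if_neg]
  rintro ⟨he, -⟩
  rcases (mem_kg_edgeSet.1 he).2 with h | h
  · exact h1 h
  · exact h2 h

theorem kswap_eq_b {e : Sym2 V} (he : e ∈ G'.edgeSet) (hce : c e = a)
    (hr : ∃ v ∈ e, (kg G' c a b).Reachable X v) : kswap G' c a b X e = b := by
  rw [kswap, if_pos ⟨mem_kg_edgeSet.2 ⟨he, Or.inl hce⟩, hr⟩, if_pos hce]

theorem kswap_eq_a (hab : a ≠ b) {e : Sym2 V} (he : e ∈ G'.edgeSet) (hce : c e = b)
    (hr : ∃ v ∈ e, (kg G' c a b).Reachable X v) : kswap G' c a b X e = a := by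
  rw [kswap, if_pos ⟨mem_kg_edgeSet.2 ⟨he, Or.inr hce⟩, hr⟩, if_neg]
  rw [hce]; exact fun h => hab h.symm

theorem kswap_cases (e : Sym2 V) : kswap G' c a b X e = c e ∨
    ((c e = a ∨ c e = b) ∧ (kswap G' c a b X e = a ∨ kswap G' c a b X e = b)) := by
  rw [kswap]
  split
  · rename_i h
    refine Or.inr ⟨(mem_kg_edgeSet.1 h.1).2, ?_⟩
    split
    · exact Or.inr rfl
    · exact Or.inl rfl
  · exact Or.inl rfl

theorem kswap_proper (hc : IsProperEdgeColoring G' n c) (hab : a ≠ b)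
    (ha : a < n) (hb : b < n) : IsProperEdgeColoring G' n (kswap G' c a b X) := by
  constructor
  · intro e he
    rcases kswap_cases (G' := G') (c := c) (a := a) (b := b) (X := X) e with h | ⟨-, h | h⟩ <;>
      rw [h]
    · exact hc.1 e he
    · exact ha
    · exact hb
  · intro e₁ he₁ e₂ he₂ hne hsh
    obtain ⟨w, hw1, hw2⟩ := hsh
    have hcol := hc.2 e₁ he₁ e₂ he₂ hne ⟨w, hw1, hw2⟩
    by_cases P1 : e₁ ∈ (kg G' c a b).edgeSet ∧ ∃ v ∈ e₁, (kg G' c a b).Reachable X v <;>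
      by_cases P2 : e₂ ∈ (kg G' c a b).edgeSet ∧ ∃ v ∈ e₂, (kg G' c a b).Reachable X v
    · rw [kswap, if_pos P1, kswap, if_pos P2]
      rcases (mem_kg_edgeSet.1 P1.1).2 with h1 | h1 <;>
        rcases (mem_kg_edgeSet.1 P2.1).2 with h2 | h2
      · rw [h1, h2] at hcol; exact absurd rfl hcol
      · rw [if_pos h1, if_neg (by rw [h2]; exact fun h => hab h.symm)]
        exact fun h => hab h.symm
      · rw [if_neg (by rw [h1]; exact fun h => hab h.symm), if_pos h2]
        exact hab
      · rw [h1, h2] at hcol; exact absurd rfl hcol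
    · have hr : (kg G' c a b).Reachable X w := kg_reach_all P1.1 P1.2 hw1
      have h2a : c e₂ ≠ a := fun hcc => P2 ⟨mem_kg_edgeSet.2 ⟨he₂, Or.inl hcc⟩, ⟨w, hw2, hr⟩⟩
      have h2b : c e₂ ≠ b := fun hcc => P2 ⟨mem_kg_edgeSet.2 ⟨he₂, Or.inr hcc⟩, ⟨w, hw2, hr⟩⟩
      rw [kswap, if_pos P1, kswap, if_neg P2]
      split
      · exact fun h => h2b h.symm
      · exact fun h => h2a h.symm
    · have hr : (kg G' c a b).Reachable X w := kg_reach_all P2.1 P2.2 hw2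
      have h1a : c e₁ ≠ a := fun hcc => P1 ⟨mem_kg_edgeSet.2 ⟨he₁, Or.inl hcc⟩, ⟨w, hw1, hr⟩⟩
      have h1b : c e₁ ≠ b := fun hcc => P1 ⟨mem_kg_edgeSet.2 ⟨he₁, Or.inr hcc⟩, ⟨w, hw1, hr⟩⟩
      rw [kswap, if_neg P1, kswap, if_pos P2]
      split
      · exact h1b
      · exact h1a
    · rw [kswap, if_neg P1, kswap, if_neg P2]
      exact hcol

theorem free_kswap_of_not_ab {w : V} {a' : ℕ} (h1 : a' ≠ a) (h2 : a' ≠ b) :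
    Free G' (kswap G' c a b X) w a' ↔ Free G' c w a' := by
  have key : ∀ e : Sym2 V, (kswap G' c a b X e = a' ↔ c e = a') := by
    intro e
    rcases kswap_cases (G' := G') (c := c) (a := a) (b := b) (X := X) e with h | ⟨hc2, hs2⟩
    · rw [h]
    · apply iff_of_false
      · rcases hs2 with h | h <;> rw [h]
        · exact fun hh => h1 hh.symm
        · exact fun hh => h2 hh.symm
      · rcases hc2 with h | h <;> rw [h]
        · exact fun hh => h1 hh.symm
        · exact fun hh => h2 hh.symm
  constructor <;> intro hf e he hwe hce
  · exact hf e he hwe ((key e).2 hce)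
  · exact hf e he hwe ((key e).1 hce)

theorem free_kswap_of_unreach {w : V} {a' : ℕ} (hnr : ¬ (kg G' c a b).Reachable X w) :
    Free G' (kswap G' c a b X) w a' ↔ Free G' c w a' := by
  constructor <;> intro hf e he hwe hce
  · rw [← kswap_eq_at_unreach hwe hnr] at hce
    exact hf e he hwe hce
  · rw [kswap_eq_at_unreach hwe hnr] at hce
    exact hf e he hwe hce

theorem free_kswap_b_iff (hab : a ≠ b) {w : V} (hw : (kg G' c a b).Reachable X w) :
    Free G' (kswap G' c a b X) w b ↔ Free G' c w a := by
  have key : ∀ e ∈ G'.edgeSet, w ∈ e → (kswap G' c a b X e = b ↔ c e = a) := by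
    intro e he hwe
    by_cases hca : c e = a
    · rw [kswap_eq_b he hca ⟨w, hwe, hw⟩]
      simp [hca]
    · by_cases hcb : c e = b
      · rw [kswap_eq_a hab he hcb ⟨w, hwe, hw⟩]
        exact iff_of_false hab (by rw [hcb]; exact fun h => hab h.symm)
      · rw [kswap_eq_of_not_ab hca hcb]
        exact iff_of_false hcb hca
  constructor <;> intro hf e he hwe hce
  · exact hf e he hwe ((key e he hwe).2 hce)
  · exact hf e he hwe ((key e he hwe).1 hce)

theorem free_kswap_a_iff (hab : a ≠ b) {w : V} (hw : (kg G' c a b).Reachable X w) :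
    Free G' (kswap G' c a b X) w a ↔ Free G' c w b := by
  have key : ∀ e ∈ G'.edgeSet, w ∈ e → (kswap G' c a b X e = a ↔ c e = b) := by
    intro e he hwe
    by_cases hca : c e = a
    · rw [kswap_eq_b he hca ⟨w, hwe, hw⟩]
      exact iff_of_false (fun h => hab h.symm) (by rw [hca]; exact hab)
    · by_cases hcb : c e = b
      · rw [kswap_eq_a hab he hcb ⟨w, hwe, hw⟩]
        simp [hcb]
      · rw [kswap_eq_of_not_ab hca hcb]
        exact iff_of_false hca hcb
  constructor <;> intro hf e he hwe hce
  · exact hf e he hwe ((key e he hwe).2 hce)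
  · exact hf e he hwe ((key e he hwe).1 hce)

end VizingAux

-- Batch 4: Kempe structural lemma
namespace VizingAux
attribute [local instance] Classical.propDecidable
set_option linter.unusedSectionVars false
set_option maxHeartbeats 1000000

section struct
variable [Fintype V] [DecidableEq V]
variable {G' : SimpleGraph V} {c : Sym2 V → ℕ} {n a b : ℕ} {X : V}

theorem kempe_no_two_ends (hc : IsProperEdgeColoring G' n c) (hab : a ≠ b)
    (hX : Free G' c X a) {w₁ w₂ : V}
    (h1 : Free G' c w₁ b) (h2 : Free G' c w₂ b)
    (hw1X : w₁ ≠ X) (hw2X : w₂ ≠ X) (hw12 : w₁ ≠ w₂)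
    (hr1 : (kg G' c a b).Reachable X w₁) (hr2 : (kg G' c a b).Reachable X w₂) : False := by
  classical
  set S := kg G' c a b with hS
  set T : SimpleGraph V :=
    { Adj := fun x y => S.Adj x y ∧ S.Reachable X x ∧ S.Reachable X y
      symm := ⟨fun x y ⟨h, hx, hy⟩ => ⟨h.symm, hy, hx⟩⟩
      loopless := ⟨fun x ⟨h, _⟩ => S.irrefl h⟩ } with hT
  set A : Finset V := Finset.univ.filter (fun v => S.Reachable X v) with hA
  have hTadj : ∀ x y : V, T.Adj x y ↔ (S.Adj x y ∧ S.Reachable X x ∧ S.Reachable X y) := by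
    intro x y; rw [hT]
  have hGadj : ∀ x y : V, T.Adj x y → G'.Adj x y := by
    intro x y h
    exact ((hTadj x y).1 h).1.1
  have hcab : ∀ x y : V, T.Adj x y → (c s(x, y) = a ∨ c s(x, y) = b) := by
    intro x y h
    exact ((hTadj x y).1 h).1.2
  -- injectivity of colors on T-neighborhoods
  have key : ∀ v : V, Set.InjOn (fun u => c s(v, u)) (T.neighborFinset v) := by
    intro v u₁ hu₁ u₂ hu₂ hEq
    by_contra hne
    have ha1 : G'.Adj v u₁ := hGadj _ _ ((T.mem_neighborFinset v u₁).1 hu₁)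
    have ha2 : G'.Adj v u₂ := hGadj _ _ ((T.mem_neighborFinset v u₂).1 hu₂)
    refine hc.2 s(v, u₁) (by simpa using ha1) s(v, u₂) (by simpa using ha2) ?_
      ⟨v, by simp, by simp⟩ hEq
    intro hEq2
    exact hne (Sym2.congr_right.1 hEq2)
  have hdeg2 : ∀ v : V, T.degree v ≤ 2 := by
    intro v
    rw [← card_neighborFinset_eq_degree, ← Finset.card_image_of_injOn (key v)]
    have himg : ((T.neighborFinset v).image (fun u => c s(v, u))) ⊆ ({a, b} : Finset ℕ) := by
      intro x hx
      obtain ⟨u, hu, rfl⟩ := Finset.mem_image.1 hx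
      simpa using hcab _ _ ((T.mem_neighborFinset v u).1 hu)
    calc ((T.neighborFinset v).image (fun u => c s(v, u))).card
        ≤ ({a, b} : Finset ℕ).card := Finset.card_le_card himg
    _ ≤ 2 := (Finset.card_insert_le _ _).trans (by simp)
  have hdeg1 : ∀ v : V, ∀ γ : ℕ, (γ = a ∨ γ = b) → Free G' c v γ → T.degree v ≤ 1 := by
    intro v γ hγ hfree
    rw [← card_neighborFinset_eq_degree, ← Finset.card_image_of_injOn (key v)]
    have himg : ((T.neighborFinset v).image (fun u => c s(v, u)))
        ⊆ ({a, b} : Finset ℕ).erase γ := by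
      intro x hx
      obtain ⟨u, hu, rfl⟩ := Finset.mem_image.1 hx
      refine Finset.mem_erase.2 ⟨?_, by simpa using hcab _ _ ((T.mem_neighborFinset v u).1 hu)⟩
      exact hfree s(v, u) (by simpa using hGadj _ _ ((T.mem_neighborFinset v u).1 hu)) (by simp)
    have hγmem : γ ∈ ({a, b} : Finset ℕ) := by
      rcases hγ with rfl | rfl <;> simp
    calc ((T.neighborFinset v).image (fun u => c s(v, u))).card
        ≤ (({a, b} : Finset ℕ).erase γ).card := Finset.card_le_card himg
    _ = ({a, b} : Finset ℕ).card - 1 := Finset.card_erase_of_mem hγmem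
    _ ≤ 2 - 1 := by
        have : ({a, b} : Finset ℕ).card ≤ 2 := (Finset.card_insert_le _ _).trans (by simp)
        omega
    _ ≤ 1 := le_refl 1
  -- handshake restricted to A
  have hdeg0 : ∀ v : V, v ∉ A → T.degree v = 0 := by
    intro v hv
    rw [← card_neighborFinset_eq_degree, Finset.card_eq_zero]
    ext u
    simp only [mem_neighborFinset, Finset.notMem_empty, iff_false]
    intro hadj
    exact hv (by rw [hA]; exact Finset.mem_filter.2 ⟨Finset.mem_univ v, ((hTadj _ _).1 hadj).2.1⟩)
  have hsum : ∑ v ∈ A, T.degree v = 2 * T.edgeFinset.card := by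
    rw [← sum_degrees_eq_twice_card_edges]
    exact Finset.sum_subset (Finset.subset_univ A) (fun x _ hx => hdeg0 x hx)
  -- injection from A.erase X into edges
  have hch : ∀ v, v ∈ A.erase X → ∃ u, T.Adj v u ∧ S.dist X u < S.dist X v := by
    intro v hv
    obtain ⟨hvX, hvA⟩ := Finset.mem_erase.1 hv
    have hrv : S.Reachable X v := (Finset.mem_filter.1 (hA ▸ hvA)).2
    obtain ⟨p, hp⟩ := hrv.exists_walk_length_eq_dist
    have hlen : p.length ≠ 0 := by
      intro h
      exact hvX (SimpleGraph.Walk.eq_of_length_eq_zero h).symm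
    rcases hq : p.reverse with _ | ⟨hadj, q'⟩
    · exfalso
      apply hlen
      have := congrArg SimpleGraph.Walk.length hq
      rw [SimpleGraph.Walk.length_reverse] at this
      simpa using this
    · rename_i u
      refine ⟨u, (hTadj _ _).2 ⟨hadj, hrv, ⟨q'.reverse⟩⟩, ?_⟩
      have hlq : q'.length + 1 = p.length := by
        have := congrArg SimpleGraph.Walk.length hq
        rw [SimpleGraph.Walk.length_reverse] at this
        simpa using this.symm
      have hdu : S.dist X u ≤ q'.length := by
        have := SimpleGraph.dist_le q'.reverse
        rwa [SimpleGraph.Walk.length_reverse] at this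
      omega
  have hinj : (A.erase X).card ≤ T.edgeFinset.card := by
    choose! u hu1 hu2 using hch
    apply Finset.card_le_card_of_injOn (fun v => s(v, u v))
    · intro v hv
      rw [Finset.mem_coe, mem_edgeFinset, mem_edgeSet]
      exact hu1 v hv
    · intro v₁ hv₁ v₂ hv₂ hEq
      rcases Sym2.eq_iff.1 hEq with ⟨h, -⟩ | ⟨hh1, hh2⟩
      · exact h
      · exfalso
        have d1 := hu2 v₁ hv₁
        have d2 := hu2 v₂ hv₂
        rw [hh2] at d1
        rw [← hh1] at d2
        omega
  -- assemble
  have hXA : X ∈ A := Finset.mem_filter.2 ⟨Finset.mem_univ X, SimpleGraph.Reachable.refl X⟩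
  have hw1A : w₁ ∈ A := Finset.mem_filter.2 ⟨Finset.mem_univ w₁, hr1⟩
  have hw2A : w₂ ∈ A := Finset.mem_filter.2 ⟨Finset.mem_univ w₂, hr2⟩
  set B : Finset V := {X, w₁, w₂} with hB
  have hBA : B ⊆ A := by
    intro x hx
    rw [hB] at hx
    rcases Finset.mem_insert.1 hx with rfl | hx
    · exact hXA
    · rcases Finset.mem_insert.1 hx with rfl | hx
      · exact hw1A
      · rw [Finset.mem_singleton.1 hx]; exact hw2A
  have hBcard : B.card = 3 := by
    rw [hB]
    rw [Finset.card_insert_of_notMem (by simp [hw1X.symm, hw2X.symm]),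
      Finset.card_insert_of_notMem (by simp [hw12]), Finset.card_singleton]
  have hsumB : ∑ v ∈ B, T.degree v ≤ 3 := by
    have : ∀ v ∈ B, T.degree v ≤ 1 := by
      intro v hv
      rw [hB] at hv
      rcases Finset.mem_insert.1 hv with rfl | hv
      · exact hdeg1 v a (Or.inl rfl) hX
      · rcases Finset.mem_insert.1 hv with rfl | hv
        · exact hdeg1 v b (Or.inr rfl) h1
        · rw [Finset.mem_singleton.1 hv]; exact hdeg1 w₂ b (Or.inr rfl) h2
    calc ∑ v ∈ B, T.degree v ≤ ∑ _v ∈ B, 1 := Finset.sum_le_sum this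
    _ = B.card := by simp
    _ = 3 := by rw [hBcard]
  have hsumAB : ∑ v ∈ A \ B, T.degree v ≤ 2 * (A.card - 3) := by
    calc ∑ v ∈ A \ B, T.degree v ≤ ∑ _v ∈ A \ B, 2 := Finset.sum_le_sum (fun v _ => hdeg2 v)
    _ = (A \ B).card * 2 := by rw [Finset.sum_const, smul_eq_mul]
    _ = 2 * (A.card - 3) := by rw [Finset.card_sdiff_of_subset hBA, hBcard, Nat.mul_comm]
  have hsplit : ∑ v ∈ A \ B, T.degree v + ∑ v ∈ B, T.degree v = ∑ v ∈ A, T.degree v :=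
    Finset.sum_sdiff hBA
  have hcardA : 3 ≤ A.card := hBcard ▸ Finset.card_le_card hBA
  have hAerase : (A.erase X).card = A.card - 1 := Finset.card_erase_of_mem hXA
  omega

end struct
end VizingAux

-- Batch 5: fans and rotation
namespace VizingAux
attribute [local instance] Classical.propDecidable
set_option linter.unusedSectionVars false
set_option maxHeartbeats 1000000

theorem chain_cons_old {α : Type*} {R : α → α → Prop} {a b : α} {l : List α} :
    List.Chain R a (b :: l) ↔ R a b ∧ List.Chain R b l :=
  List.isChain_cons_cons

theorem chain_split_old {α : Type*} {R : α → α → Prop} {a b : α} {l₁ l₂ : List α} :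
    List.Chain R a (l₁ ++ b :: l₂) ↔ List.Chain R a (l₁ ++ [b]) ∧ List.Chain R b l₂ :=
  List.isChain_cons_split

theorem chain_snoc {R : V → V → Prop} :
    ∀ (l : List V) (f b : V), List.Chain R f (l ++ [b]) ↔
      List.Chain R f l ∧ R ((f :: l).getLast (by simp)) b := by
  intro l
  induction l with
  | nil =>
    intro f b
    simp [chain_cons_old, List.Chain.nil]
  | cons g l' ih =>
    intro f b
    rw [List.cons_append, chain_cons_old, ih g b, chain_cons_old,
      List.getLast_cons_cons]
    tauto

theorem chain_imp_mem {R R' : V → V → Prop} :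
    ∀ (l : List V) (f : V), (∀ x y, x ∈ f :: l → y ∈ l → R x y → R' x y) →
      List.Chain R f l → List.Chain R' f l := by
  intro l
  induction l with
  | nil => intro f _ _; exact List.Chain.nil
  | cons g l' ih =>
    intro f himp hch
    rw [chain_cons_old] at hch ⊢
    refine ⟨himp f g (by simp) (by simp) hch.1, ih g ?_ hch.2⟩
    intro x y hx hy
    refine himp x y ?_ (by simp [hy]) 
    rcases List.mem_cons.1 hx with rfl | hx
    · simp
    · simp [hx]

/-- `y₁ :: rest` is a fan at `X` for `K`, where the edge `s(X, y₁)` is uncolored and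
`c` colors `K.deleteEdges {s(X, y₁)}`. -/
def IsFan (K : SimpleGraph V) (c : Sym2 V → ℕ) (X y₁ : V) (rest : List V) : Prop :=
  K.Adj X y₁ ∧ (∀ f ∈ rest, K.Adj X f) ∧ (y₁ :: rest).Nodup ∧
    List.Chain (fun f g => Free (K.deleteEdges {s(X, y₁)}) c f (c s(X, g))) y₁ rest

section fintype
variable [Fintype V] [DecidableEq V]

theorem degree_mono {K L : SimpleGraph V} (h : K ≤ L) (v : V) : K.degree v ≤ L.degree v := by
  rw [← deg_eq_degree, ← deg_eq_degree]
  exact deg_mono h v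

theorem fan_rotate :
    ∀ (rest : List V) (K : SimpleGraph V) (c : Sym2 V → ℕ) (X y₁ : V) (n : ℕ),
    (∀ v, K.degree v < n) →
    IsFan K c X y₁ rest →
    IsProperEdgeColoring (K.deleteEdges {s(X, y₁)}) n c →
    (∃ γ, γ < n ∧ Free (K.deleteEdges {s(X, y₁)}) c X γ ∧
      Free (K.deleteEdges {s(X, y₁)}) c ((y₁ :: rest).getLast (by simp)) γ) →
    EColorable K n := by
  intro rest
  induction rest with
  | nil =>
    intro K c X y₁ n hdeg hfan hc hγ
    obtain ⟨γ, hγn, hγX, hγl⟩ := hγ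
    exact ecolorable_extend hfan.1 hc hγn hγX (by simpa using hγl)
  | cons f₂ rest' ih =>
    intro K c X y₁ n hdeg hfan hc hγ
    obtain ⟨hadj1, hadjr, hnodup, hchain⟩ := hfan
    have hadj2 : K.Adj X f₂ := hadjr f₂ (by simp)
    have hne12 : y₁ ≠ f₂ := by
      intro h
      rw [List.nodup_cons] at hnodup
      exact hnodup.1 (h ▸ (by simp : f₂ ∈ f₂ :: rest'))
    have hXy1 : X ≠ y₁ := hadj1.ne
    have hXf2 : X ≠ f₂ := hadj2.ne
    have hXf2' : f₂ ≠ X := hadj2.ne'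
    have hedge12 : s(X, f₂) ≠ s(X, y₁) := by
      intro h
      exact hne12 (Sym2.congr_right.1 h).symm
    set G₁ := K.deleteEdges {s(X, y₁)} with hG₁
    set G₂ := K.deleteEdges {s(X, f₂)} with hG₂
    have hmem2 : s(X, f₂) ∈ G₁.edgeSet :=
      mem_deleteEdges_edgeSet (by simpa using hadj2) (by simpa using hedge12)
    set a := c s(X, f₂) with haa
    have han : a < n := hc.1 _ hmem2
    rw [chain_cons_old] at hchain
    obtain ⟨hfree12, hchain'⟩ := hchain
    -- the new coloring
    set c' : Sym2 V → ℕ := fun e => if e = s(X, y₁) then a else c e with hc'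
    have hc'val : ∀ e : Sym2 V, e ≠ s(X, y₁) → c' e = c e := by
      intro e he; rw [hc']; simp [he]
    -- membership transfers
    have hmemG₂G₁ : ∀ e : Sym2 V, e ∈ G₂.edgeSet → e ≠ s(X, y₁) → e ∈ G₁.edgeSet := by
      intro e he hne
      rw [hG₂, edgeSet_deleteEdges] at he
      exact mem_deleteEdges_edgeSet he.1 (by simpa using hne)
    have hy1G₂ : s(X, y₁) ∈ G₂.edgeSet := by
      apply mem_deleteEdges_edgeSet (by simpa using hadj1)
      simp only [Set.mem_singleton_iff]
      intro h
      exact hedge12 h.symm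
    -- properness of c' on G₂
    have hc'proper : IsProperEdgeColoring G₂ n c' := by
      constructor
      · intro e he
        by_cases h : e = s(X, y₁)
        · rw [hc']; simp only [h, if_pos rfl]; exact han
        · rw [hc'val e h]
          exact hc.1 e (hmemG₂G₁ e he h)
      · intro e₁ he₁ e₂ he₂ hne hsh
        by_cases h1 : e₁ = s(X, y₁) <;> by_cases h2 : e₂ = s(X, y₁)
        · exact absurd (h1.trans h2.symm) hne
        · obtain ⟨w, hw1, hw2⟩ := hsh
          rw [h1, Sym2.mem_iff] at hw1
          have hv1 : c' e₁ = a := by rw [hc']; simp [h1]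
          have hv2 : c' e₂ = c e₂ := hc'val e₂ h2
          rw [hv1, hv2]
          have he₂G₁ := hmemG₂G₁ e₂ he₂ h2
          rcases hw1 with rfl | rfl
          · -- shared vertex X : colors at X distinct from a
            intro hcc
            have hne2 : e₂ ≠ s(w, f₂) := by
              intro h
              rw [hG₂, edgeSet_deleteEdges] at he₂
              exact he₂.2 (by simpa using h)
            exact hc.2 e₂ he₂G₁ s(w, f₂) hmem2 hne2 ⟨w, hw2, by simp⟩ (hcc.symm)
          · -- shared vertex y₁ : a is free at y₁
            intro hcc
            exact hfree12 e₂ he₂G₁ hw2 hcc.symm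
        · obtain ⟨w, hw1, hw2⟩ := hsh
          rw [h2, Sym2.mem_iff] at hw2
          have hv2 : c' e₂ = a := by rw [hc']; simp [h2]
          have hv1 : c' e₁ = c e₁ := hc'val e₁ h1
          rw [hv1, hv2]
          have he₁G₁ := hmemG₂G₁ e₁ he₁ h1
          rcases hw2 with rfl | rfl
          · intro hcc
            have hne1 : e₁ ≠ s(w, f₂) := by
              intro h
              rw [hG₂, edgeSet_deleteEdges] at he₁
              exact he₁.2 (by simpa using h)
            exact hc.2 e₁ he₁G₁ s(w, f₂) hmem2 hne1 ⟨w, hw1, by simp⟩ hcc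
          · intro hcc
            exact hfree12 e₁ he₁G₁ hw1 hcc
        · rw [hc'val e₁ h1, hc'val e₂ h2]
          exact hc.2 e₁ (hmemG₂G₁ e₁ he₁ h1) e₂ (hmemG₂G₁ e₂ he₂ h2) hne hsh
    -- freeness transfer from (G₁, c) to (G₂, c') for vertices other than X, y₁
    have hfree_transfer : ∀ w γ, w ≠ X → w ≠ y₁ → Free G₁ c w γ → Free G₂ c' w γ := by
      intro w γ hwX hwy1 hf e he hwe
      by_cases h : e = s(X, y₁)
      · exfalso
        rw [h, Sym2.mem_iff] at hwe
        rcases hwe with rfl | rfl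
        · exact hwX rfl
        · exact hwy1 rfl
      · rw [hc'val e h]
        exact hf e (hmemG₂G₁ e he h) hwe
    -- freeness transfer at X
    have hfreeX : ∀ γ, Free G₁ c X γ → Free G₂ c' X γ := by
      intro γ hf e he hwe
      by_cases h : e = s(X, y₁)
      · rw [hc']
        simp only [h, if_pos rfl]
        exact hf s(X, f₂) hmem2 (by simp)
      · rw [hc'val e h]
        exact hf e (hmemG₂G₁ e he h) hwe
    -- the new fan
    have hfan' : IsFan K c' X f₂ rest' := by
      refine ⟨hadj2, fun f hf => hadjr f (by simp [hf]), (List.nodup_cons.1 hnodup).2, ?_⟩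
      rw [List.nodup_cons] at hnodup
      apply chain_imp_mem rest' f₂ _ hchain'
      intro x y hx hy hR
      have hyne1 : y ≠ y₁ := by
        intro h
        exact hnodup.1 (h ▸ (by simp [hy] : y ∈ f₂ :: rest'))
      have hxne1 : x ≠ y₁ := by
        intro h
        exact hnodup.1 (h ▸ (by simp [hx] : x ∈ f₂ :: rest'))
      have hxneX : x ≠ X := by
        rcases List.mem_cons.1 hx with rfl | hx'
        · exact hXf2'
        · exact (hadjr x (by simp [hx'])).ne'
      have hcval : c' s(X, y) = c s(X, y) := by
        apply hc'val
        intro h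
        exact hyne1 (Sym2.congr_right.1 h)
      rw [hcval]
      exact hfree_transfer x _ hxneX hxne1 hR
    -- the free color for the recursive call
    obtain ⟨γ, hγn, hγX, hγl⟩ := hγ
    have hlast_eq : (y₁ :: f₂ :: rest').getLast (by simp) = (f₂ :: rest').getLast (by simp) :=
      List.getLast_cons (by simp)
    rw [hlast_eq] at hγl
    have hlmem : (f₂ :: rest').getLast (by simp) ∈ f₂ :: rest' := List.getLast_mem _
    have hlneX : (f₂ :: rest').getLast (by simp) ≠ X := by
      rcases List.mem_cons.1 hlmem with h | h
      · rw [h]; exact hXf2'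
      · exact (hadjr _ (by simp [h])).ne'
    have hlne1 : (f₂ :: rest').getLast (by simp) ≠ y₁ := by
      intro h
      rw [List.nodup_cons] at hnodup
      exact hnodup.1 (h ▸ hlmem)
    refine ih K c' X f₂ n hdeg hfan' hc'proper ⟨γ, hγn, hfreeX γ hγX, ?_⟩
    exact hfree_transfer _ γ hlneX hlne1 hγl

end fintype
end VizingAux

-- Batch 6: Misra-Gries extension
namespace VizingAux
attribute [local instance] Classical.propDecidable
set_option linter.unusedSectionVars false
set_option maxHeartbeats 1000000

section fintype
variable [Fintype V] [DecidableEq V]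

theorem mg_extend {K : SimpleGraph V} {X y₁ : V}
    (hadj : K.Adj X y₁) {n : ℕ} (hdeg : ∀ v, K.degree v < n)
    (hcol : EColorable (K.deleteEdges {s(X, y₁)}) n) : EColorable K n := by
  classical
  obtain ⟨c, hc⟩ := hcol
  set G₁ := K.deleteEdges {s(X, y₁)} with hG₁
  letI : DecidableRel G₁.Adj := fun a b => Classical.propDecidable (G₁.Adj a b)
  have hdegG₁ : ∀ v, G₁.degree v < n := fun v =>
    lt_of_le_of_lt (degree_mono (deleteEdges_le _) v) (hdeg v)
  obtain ⟨cc, hccn, hccX⟩ := exists_free hc (hdegG₁ X)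
  -- maximal fan
  have hfan0 : IsFan K c X y₁ [] := ⟨hadj, by simp, by simp, List.Chain.nil⟩
  have hFSne : Set.Nonempty {m | ∃ rest : List V, IsFan K c X y₁ rest ∧ rest.length = m} :=
    ⟨0, [], hfan0, rfl⟩
  have hFSbdd : BddAbove {m | ∃ rest : List V, IsFan K c X y₁ rest ∧ rest.length = m} := by
    refine ⟨Fintype.card V, ?_⟩
    rintro m ⟨rest, hfan, rfl⟩
    have h1 := hfan.2.2.1.length_le_card
    simp only [List.length_cons] at h1
    omega
  obtain ⟨rest, hfan, hlen⟩ := Nat.sSup_mem hFSne hFSbdd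
  have hmax : ∀ rest', IsFan K c X y₁ rest' → rest'.length ≤ rest.length := by
    intro rest' h
    rw [hlen]
    exact le_csSup hFSbdd ⟨rest', h, rfl⟩
  obtain ⟨hadj1, hadjr, hnodup, hchain⟩ := hfan
  have hmemadj : ∀ f ∈ y₁ :: rest, K.Adj X f := by
    intro f hf
    rcases List.mem_cons.1 hf with rfl | hf
    · exact hadj1
    · exact hadjr f hf
  have hmemneX : ∀ f ∈ y₁ :: rest, f ≠ X := fun f hf => (hmemadj f hf).ne'
  have hG₁adjr : ∀ g ∈ rest, G₁.Adj X g := by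
    intro g hg
    rw [← mem_edgeSet, hG₁]
    apply mem_deleteEdges_edgeSet (by simpa using hadjr g hg)
    simp only [Set.mem_singleton_iff]
    intro h
    have : g = y₁ := Sym2.congr_right.1 h
    rw [List.nodup_cons] at hnodup
    exact hnodup.1 (this ▸ hg)
  obtain ⟨d, hdn, hdfl⟩ := exists_free hc (hdegG₁ ((y₁ :: rest).getLast (by simp)))
  by_cases hdX : Free G₁ c X d
  · exact fan_rotate rest K c X y₁ n hdeg ⟨hadj1, hadjr, hnodup, hchain⟩ hc ⟨d, hdn, hdX, hdfl⟩
  have hccd : cc ≠ d := fun h => hdX (h ▸ hccX)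
  -- the edge at X colored d
  have hdX' : ∃ e ∈ G₁.edgeSet, X ∈ e ∧ c e = d := by
    by_contra hcon
    push_neg at hcon
    exact hdX fun e he hXe hce => (hcon e he hXe) hce
  obtain ⟨e, heG, hXe, hce⟩ := hdX'
  set y := Sym2.Mem.other hXe with hy
  have hey : s(X, y) = e := Sym2.other_spec hXe
  have heyG₁ : s(X, y) ∈ G₁.edgeSet := by rw [hey]; exact heG
  have hyadjG₁ : G₁.Adj X y := (G₁.mem_edgeSet).1 heyG₁
  have hyadjK : K.Adj X y := (deleteEdges_le _) hyadjG₁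
  have hcXy : c s(X, y) = d := by rw [hey]; exact hce
  have hyne1 : y ≠ y₁ := by
    intro h
    have h2 := heyG₁
    rw [hG₁, edgeSet_deleteEdges] at h2
    refine h2.2 ?_
    rw [h]
    rfl
  -- uniqueness of the d-colored edge at X
  have hd_unique : ∀ g : V, G₁.Adj X g → g ≠ y → c s(X, g) ≠ d := by
    intro g hg hgy hcg
    apply hc.2 s(X, g) (by simpa using hg) s(X, y) heyG₁ ?_ ⟨X, by simp, by simp⟩
    · rw [hcg, hcXy]
    · intro h
      exact hgy (Sym2.congr_right.1 h)
  -- maximality forces y to lie in the fan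
  have hymem : y ∈ y₁ :: rest := by
    by_contra hyL
    have hnodup' : (y₁ :: (rest ++ [y])).Nodup := by
      rw [show y₁ :: (rest ++ [y]) = (y₁ :: rest) ++ [y] from rfl, List.nodup_append]
      refine ⟨hnodup, List.nodup_singleton y, ?_⟩
      intro a ha b hay hab
      rw [List.mem_singleton] at hay
      exact hyL (by rw [← hay, ← hab]; exact ha)
    have hfanext : IsFan K c X y₁ (rest ++ [y]) := by
      refine ⟨hadj1, ?_, hnodup', ?_⟩
      · intro f hf
        rcases List.mem_append.1 hf with hf | hf
        · exact hadjr f hf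
        · rw [List.mem_singleton.1 hf]; exact hyadjK
      · rw [chain_snoc]
        refine ⟨hchain, ?_⟩
        rw [hcXy]
        exact hdfl
    have := hmax _ hfanext
    simp at this
  have hymem' : y ∈ rest := by
    rcases List.mem_cons.1 hymem with h | h
    · exact absurd h hyne1
    · exact h
  obtain ⟨l₁, l₂, hsplit⟩ := List.append_of_mem hymem'
  subst hsplit
  have hnodup2 : ((y₁ :: l₁) ++ (y :: l₂)).Nodup := by
    rw [List.cons_append]; exact hnodup
  obtain ⟨hnod1, hnod2, hdisj⟩ := List.nodup_append.1 hnodup2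
  have hrestnodup : (l₁ ++ y :: l₂).Nodup := (List.nodup_cons.1 hnodup).2
  have hynl₁ : y ∉ l₁ := by
    intro h
    exact (List.nodup_append.1 hrestnodup).2.2 y h y (by simp) rfl
  have hynl₂ : y ∉ l₂ := by
    have := (List.nodup_append.1 hrestnodup).2.1
    rw [List.nodup_cons] at this
    exact this.1
  -- split the chain
  rw [chain_split_old] at hchain
  obtain ⟨hchain1, hchain2⟩ := hchain
  rw [chain_snoc] at hchain1
  obtain ⟨hchainl₁, hRpy⟩ := hchain1
  set p := (y₁ :: l₁).getLast (by simp) with hp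
  have hpd : Free G₁ c p d := by rw [← hcXy]; exact hRpy
  have hpmemL : p ∈ y₁ :: (l₁ ++ y :: l₂) := by
    rw [← List.cons_append]
    exact List.mem_append.2 (Or.inl (List.getLast_mem _))
  have hpmem1 : p ∈ y₁ :: l₁ := List.getLast_mem _
  have hpneX : p ≠ X := hmemneX p hpmemL
  set flast := (y₁ :: (l₁ ++ y :: l₂)).getLast (by simp) with hflast
  have hflsuffix : flast ∈ y :: l₂ := by
    have h3 : flast = (y :: l₂).getLast (by simp) :=
      List.getLast_append_of_right_ne_nil (y₁ :: l₁) (y :: l₂) (by simp)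
    rw [h3]
    exact List.getLast_mem _
  have hflmemL : flast ∈ y₁ :: (l₁ ++ y :: l₂) := by
    rw [← List.cons_append]
    exact List.mem_append.2 (Or.inr hflsuffix)
  have hflneX : flast ≠ X := hmemneX flast hflmemL
  have hpnefl : p ≠ flast := by
    intro h
    exact hdisj p hpmem1 flast hflsuffix h
  -- the swapped coloring
  set c₂ := kswap G₁ c cc d X with hc₂
  have hc₂proper : IsProperEdgeColoring G₁ n c₂ := kswap_proper hc hccd hccn hdn
  have hXreach : (kg G₁ c cc d).Reachable X X := SimpleGraph.Reachable.refl X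
  have hfreeXd : Free G₁ c₂ X d := (free_kswap_b_iff hccd hXreach).2 hccX
  -- color transfer on non-special fan edges
  have htrans : ∀ (x g : V), g ∈ l₁ ++ y :: l₂ → g ≠ y →
      Free G₁ c x (c s(X, g)) → Free G₁ c₂ x (c₂ s(X, g)) := by
    intro x g hg hgy hf
    have hgadj : G₁.Adj X g := hG₁adjr g hg
    have hgcc : c s(X, g) ≠ cc := fun h => hccX s(X, g) (by simpa using hgadj) (by simp) h
    have hgd : c s(X, g) ≠ d := hd_unique g hgadj hgy
    have hval : c₂ s(X, g) = c s(X, g) := kswap_eq_of_not_ab hgcc hgd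
    rw [hval]
    exact (free_kswap_of_not_ab hgcc hgd).2 hf
  by_cases hrp : (kg G₁ c cc d).Reachable X p
  · -- p is on the Kempe chain: the full fan survives, with the last vertex untouched
    have hflun : ¬ (kg G₁ c cc d).Reachable X flast := by
      intro hrfl
      exact kempe_no_two_ends hc hccd hccX hpd hdfl hpneX hflneX hpnefl hrp hrfl
    have hfl2 : Free G₁ c₂ flast d := (free_kswap_of_unreach hflun).2 hdfl
    have hchain₂ : List.Chain (fun f g => Free G₁ c₂ f (c₂ s(X, g))) y₁ (l₁ ++ y :: l₂) := by
      rw [chain_split_old, chain_snoc]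
      refine ⟨⟨?_, ?_⟩, ?_⟩
      · refine chain_imp_mem l₁ y₁ ?_ hchainl₁
        intro a b _ hb
        exact htrans a b (List.mem_append.2 (Or.inl hb)) (fun h => hynl₁ (h ▸ hb))
      · have hv : c₂ s(X, y) = cc := kswap_eq_a hccd heyG₁ hcXy ⟨X, by simp, hXreach⟩
        rw [hv]
        exact (free_kswap_a_iff hccd hrp).2 hpd
      · refine chain_imp_mem l₂ y ?_ hchain2
        intro a b _ hb
        exact htrans a b (by simp [hb]) (fun h => hynl₂ (h ▸ hb))
    exact fan_rotate (l₁ ++ y :: l₂) K c₂ X y₁ n hdeg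
      ⟨hadj1, hadjr, hnodup, hchain₂⟩ hc₂proper ⟨d, hdn, hfreeXd, hfl2⟩
  · -- p is not on the Kempe chain: use the fan up to p
    have hp2 : Free G₁ c₂ p d := (free_kswap_of_unreach hrp).2 hpd
    have hchain₂ : List.Chain (fun f g => Free G₁ c₂ f (c₂ s(X, g))) y₁ l₁ := by
      refine chain_imp_mem l₁ y₁ ?_ hchainl₁
      intro a b _ hb
      exact htrans a b (List.mem_append.2 (Or.inl hb)) (fun h => hynl₁ (h ▸ hb))
    exact fan_rotate l₁ K c₂ X y₁ n hdeg
      ⟨hadj1, fun f hf => hadjr f (List.mem_append.2 (Or.inl hf)), hnod1, hchain₂⟩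
      hc₂proper ⟨d, hdn, hfreeXd, hp2⟩

end fintype
end VizingAux

-- Batch 7: Vizing's bound; Batch 8: step-down
namespace VizingAux
attribute [local instance] Classical.propDecidable
set_option linter.unusedSectionVars false
set_option maxHeartbeats 1000000

theorem deleteEdges_adj' {K : SimpleGraph V} {s : Set (Sym2 V)} {v w : V} :
    (K.deleteEdges s).Adj v w ↔ K.Adj v w ∧ s(v, w) ∉ s := by
  rw [← SimpleGraph.mem_edgeSet, edgeSet_deleteEdges, Set.mem_diff, SimpleGraph.mem_edgeSet]

section fintype
variable [Fintype V] [DecidableEq V]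

theorem vizing_bound (n : ℕ) :
    ∀ (m : ℕ) (K : SimpleGraph V), K.edgeFinset.card = m → (∀ v, K.degree v < n) →
      EColorable K n := by
  intro m
  induction m using Nat.strong_induction_on with
  | _ m ih =>
    intro K hm hdeg
    rcases Set.eq_empty_or_nonempty K.edgeSet with he | he
    · exact ecolorable_of_edgeSet_empty he n
    obtain ⟨e, heK⟩ := he
    revert heK
    induction e using Sym2.ind with
    | _ X y =>
    intro heK
    have hadj : K.Adj X y := heK
    letI : DecidableRel (K.deleteEdges {s(X, y)}).Adj := fun a b => Classical.propDecidable _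
    have hsub : (K.deleteEdges {s(X, y)}).edgeFinset ⊂ K.edgeFinset := by
      rw [Finset.ssubset_iff_subset_ne]
      constructor
      · exact edgeFinset_mono (K.deleteEdges_le _)
      · intro h
        have h2 : s(X, y) ∈ (K.deleteEdges {s(X, y)}).edgeFinset := by
          rw [h, mem_edgeFinset]
          exact heK
        rw [mem_edgeFinset, edgeSet_deleteEdges] at h2
        exact h2.2 rfl
    have hcard : (K.deleteEdges {s(X, y)}).edgeFinset.card < m := by
      rw [← hm]
      exact Finset.card_lt_card hsub
    have hdeg' : ∀ v, (K.deleteEdges {s(X, y)}).degree v < n := fun v =>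
      lt_of_le_of_lt (degree_mono (K.deleteEdges_le _) v) (hdeg v)
    exact mg_extend hadj hdeg (ih _ hcard _ rfl hdeg')

theorem chrom_le_of_maxDeg_lt {K : SimpleGraph V} {n : ℕ} (h : maxDeg K < n) :
    edgeChromaticNumber K ≤ n := by
  rw [chrom_le_iff]
  refine vizing_bound n _ K rfl (fun v => ?_)
  rw [← deg_eq_degree]
  exact lt_of_le_of_lt (deg_le_maxDeg K v) h

theorem step_down {G : SimpleGraph V} {k : ℕ} (hk2 : 2 ≤ k) :
    ∀ j : ℕ, k ≤ j → ∀ H : SimpleGraph V, H ≤ G → maxDeg H ≤ j →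
      j + 1 ≤ edgeChromaticNumber H →
      ∃ K : SimpleGraph V, K ≤ G ∧ maxDeg K ≤ k ∧ k + 1 ≤ edgeChromaticNumber K := by
  intro j
  induction j with
  | zero => intro h0; omega
  | succ j ihj =>
    intro hkj H hHG hΔ hχ
    by_cases hkeq : k = j + 1
    · exact ⟨H, hHG, hkeq ▸ hΔ, hkeq ▸ hχ⟩
    have hkj' : k ≤ j := by omega
    have hj2 : 2 ≤ j := le_trans hk2 hkj'
    -- minimal subgraph of H with χ' ≥ j + 2
    have hS : Set.Nonempty {m | ∃ K : SimpleGraph V,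
        (K ≤ H ∧ j + 2 ≤ edgeChromaticNumber K) ∧ K.edgeFinset.card = m} :=
      ⟨H.edgeFinset.card, H, ⟨le_refl H, hχ⟩, rfl⟩
    obtain ⟨H₀, ⟨hH₀H, hH₀χ⟩, hH₀card⟩ := Nat.sInf_mem hS
    have hmin : ∀ L : SimpleGraph V, L ≤ H → L.edgeFinset.card < H₀.edgeFinset.card →
        edgeChromaticNumber L ≤ j + 1 := by
      intro L hLH hLcard
      by_contra hcon
      push_neg at hcon
      have h2 : H₀.edgeFinset.card ≤ L.edgeFinset.card := by
        rw [hH₀card]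
        exact Nat.sInf_le ⟨L, ⟨hLH, hcon⟩, rfl⟩
      omega
    by_cases hΔ₀ : maxDeg H₀ ≤ j
    · exact ihj hkj' H₀ (hH₀H.trans hHG) hΔ₀ (by omega)
    have hΔ₀' : maxDeg H₀ = j + 1 := by
      have := le_trans (maxDeg_mono hH₀H) hΔ
      omega
    have hVne : Nonempty V := by
      by_contra hne
      rw [not_nonempty_iff] at hne
      have : maxDeg H₀ ≤ 0 := maxDeg_le (fun v => (hne.false v).elim)
      omega
    obtain ⟨v, hv⟩ := exists_deg_eq_maxDeg H₀
    rw [hΔ₀'] at hv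
    have hnbr_ne : (H₀.neighborSet v).Nonempty := by
      apply Set.nonempty_of_ncard_ne_zero
      rw [deg] at hv
      omega
    obtain ⟨u, hu⟩ := hnbr_ne
    rw [SimpleGraph.mem_neighborSet] at hu
    have huv : u ≠ v := hu.ne'
    set H₁ := H₀.deleteEdges {s(v, u)} with hH₁
    letI : DecidableRel H₁.Adj := fun a b => Classical.propDecidable (H₁.Adj a b)
    have hH₁H : H₁ ≤ H := (H₀.deleteEdges_le _).trans hH₀H
    have hH₁sub : H₁.edgeFinset ⊂ H₀.edgeFinset := by
      rw [Finset.ssubset_iff_subset_ne]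
      refine ⟨edgeFinset_mono (H₀.deleteEdges_le _), ?_⟩
      intro h
      have h2 : s(v, u) ∈ H₁.edgeFinset := by
        rw [h, mem_edgeFinset]
        exact hu
      rw [mem_edgeFinset, hH₁, edgeSet_deleteEdges] at h2
      exact h2.2 rfl
    have hH₁χ : edgeChromaticNumber H₁ ≤ j + 1 :=
      hmin H₁ hH₁H (Finset.card_lt_card hH₁sub)
    obtain ⟨c, hc⟩ := chrom_le_iff.1 hH₁χ
    -- degrees in H₁
    have hnbrv : H₁.neighborSet v = H₀.neighborSet v \ {u} := by
      ext w
      simp only [SimpleGraph.mem_neighborSet, Set.mem_diff, Set.mem_singleton_iff, hH₁,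
        deleteEdges_adj', Set.mem_singleton_iff]
      constructor
      · rintro ⟨h1, h2⟩
        exact ⟨h1, fun h => h2 (by rw [h])⟩
      · rintro ⟨h1, h2⟩
        refine ⟨h1, fun h => h2 ?_⟩
        rcases Sym2.eq_iff.1 h with ⟨-, h3⟩ | ⟨h3, -⟩
        · exact h3
        · exact absurd h3 hu.ne
    have hdegv : H₁.degree v = j := by
      rw [← deg_eq_degree, deg, hnbrv,
        Set.ncard_diff_singleton_of_mem (by rwa [SimpleGraph.mem_neighborSet])]
      rw [deg] at hv
      omega
    have hnbru2 : H₁.neighborSet u = H₀.neighborSet u \ {v} := by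
      ext z
      simp only [SimpleGraph.mem_neighborSet, Set.mem_diff, Set.mem_singleton_iff, hH₁,
        deleteEdges_adj', Set.mem_singleton_iff]
      constructor
      · rintro ⟨h1, h2⟩
        exact ⟨h1, fun h => h2 (by rw [h, Sym2.eq_swap])⟩
      · rintro ⟨h1, h2⟩
        refine ⟨h1, fun h => h2 ?_⟩
        rcases Sym2.eq_iff.1 h with ⟨h3, -⟩ | ⟨-, h3⟩
        · exact absurd h3 huv
        · exact h3
    have hdegu : H₁.degree u ≤ j := by
      have h2 : deg H₀ u ≤ j + 1 := hΔ₀' ▸ deg_le_maxDeg H₀ u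
      rw [← deg_eq_degree, deg, hnbru2, Set.ncard_diff_singleton_of_mem
        (by rw [SimpleGraph.mem_neighborSet]; exact hu.symm)]
      rw [deg] at h2
      omega
    -- free colors
    obtain ⟨α, hαn, hαv⟩ := exists_free hc (by omega : H₁.degree v < j + 1)
    obtain ⟨γ, hγn, hγu⟩ := exists_free hc (by omega : H₁.degree u < j + 1)
    have hαγ : γ ≠ α := by
      intro h
      have hext : EColorable H₀ (j + 1) := ecolorable_extend hu hc hαn hαv (h ▸ hγu)
      have := chrom_le_iff.2 hext
      omega
    -- pick β distinct from α and γ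
    have hβex : ((Finset.range (j + 1)) \ {α, γ}).Nonempty := by
      rw [← Finset.card_pos]
      have h1 : ({α, γ} : Finset ℕ).card ≤ 2 := (Finset.card_insert_le _ _).trans (by simp)
      have h4 := Finset.le_card_sdiff ({α, γ} : Finset ℕ) (Finset.range (j + 1))
      rw [Finset.card_range] at h4
      omega
    obtain ⟨β, hβ⟩ := hβex
    rw [Finset.mem_sdiff, Finset.mem_range] at hβ
    have hβn : β < j + 1 := hβ.1
    have hβα : β ≠ α := fun h => hβ.2 (by simp [h])
    have hβγ : β ≠ γ := fun h => hβ.2 (by simp [h])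
    -- two free colors force low degree
    have two_free : ∀ (w : V) (δ₁ δ₂ : ℕ), δ₁ ≠ δ₂ → δ₁ < j + 1 → δ₂ < j + 1 →
        Free H₁ c w δ₁ → Free H₁ c w δ₂ → H₁.degree w + 2 ≤ j + 1 := by
      intro w δ₁ δ₂ hne h1 h2 hf1 hf2
      have hcard2 : ({δ₁, δ₂} : Finset ℕ).card = 2 := by
        rw [Finset.card_insert_of_notMem (by simp [hne]), Finset.card_singleton]
      have := degree_add_free_le hc w {δ₁, δ₂} ?_ ?_
      · omega
      · intro x hx
        rcases Finset.mem_insert.1 hx with rfl | hx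
        · exact Finset.mem_range.2 h1
        · rw [Finset.mem_singleton.1 hx]; exact Finset.mem_range.2 h2
      · intro x hx
        rcases Finset.mem_insert.1 hx with rfl | hx
        · exact hf1
        · rw [Finset.mem_singleton.1 hx]; exact hf2
    have one_free : ∀ (w : V) (δ : ℕ), δ < j + 1 → Free H₁ c w δ →
        H₁.degree w + 1 ≤ j + 1 := by
      intro w δ h1 hf
      have := degree_add_free_le hc w {δ} (by simpa using Finset.mem_range.2 h1)
        (by intro x hx; rw [Finset.mem_singleton.1 hx]; exact hf)
      simpa using this
    -- the matching of β-colored edges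
    set M : Set (Sym2 V) := {e' | e' ∈ H₁.edgeSet ∧ c e' = β} with hM
    have hMmatch : ∀ e₁ ∈ M, ∀ e₂ ∈ M, e₁ ≠ e₂ → ¬ ∃ w, w ∈ e₁ ∧ w ∈ e₂ := by
      rintro e₁ ⟨he₁, hc₁⟩ e₂ ⟨he₂, hc₂⟩ hne ⟨w, hw1, hw2⟩
      exact hc.2 e₁ he₁ e₂ he₂ hne ⟨w, hw1, hw2⟩ (hc₁.trans hc₂.symm)
    have h5 := chrom_le_deleteEdges_matching H₀ M hMmatch
    have hK'χ : j + 1 ≤ edgeChromaticNumber (H₀.deleteEdges M) := by omega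
    -- max degree of the new graph
    have hK'Δ : maxDeg (H₀.deleteEdges M) ≤ j := by
      apply maxDeg_le
      intro w
      by_cases hdw : deg H₀ w ≤ j
      · exact le_trans (deg_mono (H₀.deleteEdges_le M) w) hdw
      have hdw' : deg H₀ w = j + 1 := by
        have := hΔ₀' ▸ deg_le_maxDeg H₀ w
        omega
      -- w has a β-colored H₁-edge
      have hwβ : ¬ Free H₁ c w β := by
        intro hfree
        by_cases hwv : w = v
        · subst hwv
          have := two_free w α β (fun h => hβα h.symm) hαn hβn hαv hfree
          omega
        by_cases hwu : w = u
        · subst hwu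
          have hdegu2 : H₁.degree w = j := by
            rw [← deg_eq_degree, deg, hnbru2, Set.ncard_diff_singleton_of_mem
              (by rw [SimpleGraph.mem_neighborSet]; exact hu.symm)]
            rw [deg] at hdw'
            omega
          have := two_free w γ β (fun h => hβγ h.symm) hγn hβn hγu hfree
          omega
        · -- w is incident to neither v nor u
          have hnbrw : H₁.neighborSet w = H₀.neighborSet w := by
            ext z
            simp only [SimpleGraph.mem_neighborSet, hH₁, deleteEdges_adj',
              Set.mem_singleton_iff]
            constructor
            · exact And.left
            · intro h
              refine ⟨h, fun hEq => ?_⟩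
              have hwmem : w ∈ s(v, u) := hEq ▸ (by simp : w ∈ s(w, z))
              rw [Sym2.mem_iff] at hwmem
              rcases hwmem with h3 | h3
              · exact hwv h3
              · exact hwu h3
          have hdegw : H₁.degree w = j + 1 := by
            rw [← deg_eq_degree, deg, hnbrw]
            rw [deg] at hdw'
            exact hdw'
          have := one_free w β hβn hfree
          omega
      have hwβ' : ∃ e' ∈ H₁.edgeSet, w ∈ e' ∧ c e' = β := by
        by_contra hcon
        push_neg at hcon
        exact hwβ (fun e' he' hwe' => hcon e' he' hwe')
      obtain ⟨e', he', hwe', hce'⟩ := hwβ'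
      set x := Sym2.Mem.other hwe' with hx
      have hex : s(w, x) = e' := Sym2.other_spec hwe'
      have hxadj : H₁.Adj w x := by
        rw [← SimpleGraph.mem_edgeSet, hex]
        exact he'
      have hxM : s(w, x) ∈ M := by
        rw [hex]
        exact ⟨he', hce'⟩
      have hsub2 : (H₀.deleteEdges M).neighborSet w ⊆ H₀.neighborSet w \ {x} := by
        intro z hz
        rw [SimpleGraph.mem_neighborSet, deleteEdges_adj'] at hz
        refine ⟨(SimpleGraph.mem_neighborSet _ _ _).2 hz.1, ?_⟩
        rw [Set.mem_singleton_iff]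
        intro h
        subst h
        exact hz.2 hxM
      have h6 := Set.ncard_le_ncard hsub2 ((H₀.neighborSet w).toFinite.diff)
      have hxH₀ : H₀.Adj w x := (H₀.deleteEdges_le _) hxadj
      have h7 : (H₀.neighborSet w \ {x}).ncard = deg H₀ w - 1 := by
        rw [deg, Set.ncard_diff_singleton_of_mem
          (by rwa [SimpleGraph.mem_neighborSet])]
      rw [deg]
      omega
    exact ihj hkj' (H₀.deleteEdges M) ((H₀.deleteEdges_le M).trans (hH₀H.trans hHG)) hK'Δ hK'χ

end fintype
end VizingAux

-- Batch 9: critical subgraph selection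
namespace VizingAux
attribute [local instance] Classical.propDecidable
set_option linter.unusedSectionVars false
set_option maxHeartbeats 1000000

section fintype
variable [Fintype V] [DecidableEq V]

theorem exists_critical_graph {G : SimpleGraph V} {k : ℕ}
    (hk2 : 2 ≤ k) (hkΔ : k ≤ maxDeg G) (hG : maxDeg G < edgeChromaticNumber G) :
    ∃ K : SimpleGraph V, K ≤ G ∧ maxDeg K = k ∧ edgeChromaticNumber K = k + 1 ∧
      ∀ L : SimpleGraph V, L ≤ K → L ≠ K → edgeChromaticNumber L ≤ k := by
  obtain ⟨HP, hHPG, hHPΔ, hHPχ⟩ := step_down hk2 (maxDeg G) hkΔ G le_rfl le_rfl (by omega)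
  have hS : Set.Nonempty {m | ∃ K : SimpleGraph V,
      (K ≤ HP ∧ k + 1 ≤ edgeChromaticNumber K) ∧ K.edgeFinset.card = m} :=
    ⟨HP.edgeFinset.card, HP, ⟨le_rfl, hHPχ⟩, rfl⟩
  obtain ⟨K₀, ⟨hK₀HP, hK₀χ⟩, hK₀card⟩ := Nat.sInf_mem hS
  have hmin : ∀ L : SimpleGraph V, L ≤ HP → L.edgeFinset.card < K₀.edgeFinset.card →
      edgeChromaticNumber L ≤ k := by
    intro L hLH hLcard
    by_contra hcon
    push_neg at hcon
    have h2 : K₀.edgeFinset.card ≤ L.edgeFinset.card := by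
      rw [hK₀card]
      exact Nat.sInf_le ⟨L, ⟨hLH, hcon⟩, rfl⟩
    omega
  have hcard_lt : ∀ L : SimpleGraph V, L ≤ K₀ → L ≠ K₀ →
      L.edgeFinset.card < K₀.edgeFinset.card := by
    intro L hL hne
    apply Finset.card_lt_card
    rw [Finset.ssubset_iff_subset_ne]
    exact ⟨edgeFinset_mono hL, fun h => hne (edgeFinset_inj.1 h)⟩
  have hsub : ∀ L : SimpleGraph V, L ≤ K₀ → L ≠ K₀ → edgeChromaticNumber L ≤ k :=
    fun L hL hne => hmin L (hL.trans hK₀HP) (hcard_lt L hL hne)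
  have hΔle : maxDeg K₀ ≤ k := le_trans (maxDeg_mono hK₀HP) hHPΔ
  have hΔeq : maxDeg K₀ = k := by
    by_contra hne
    have h1 : maxDeg K₀ < k := by omega
    have := chrom_le_of_maxDeg_lt h1
    omega
  have hedge : K₀.edgeSet.Nonempty := by
    apply edgeSet_nonempty_of_not_ecolorable (n := 0)
    intro hcol
    have := chrom_le_iff.2 (hcol.mono (Nat.zero_le k))
    omega
  obtain ⟨e, he⟩ := hedge
  have hχeq : edgeChromaticNumber K₀ = k + 1 := by
    have hdel : edgeChromaticNumber (K₀.deleteEdges {e}) ≤ k := by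
      apply hsub
      · exact K₀.deleteEdges_le _
      · intro h
        have h2 : e ∈ (K₀.deleteEdges {e}).edgeSet := by rw [h]; exact he
        rw [edgeSet_deleteEdges] at h2
        exact h2.2 rfl
    have := chrom_le_deleteEdges_single K₀ e
    omega
  exact ⟨K₀, hK₀HP.trans hHPG, hΔeq, hχeq, hsub⟩

end fintype
end VizingAux

-- Batch 10: transfer along embeddings and the main theorem
namespace VizingAux
attribute [local instance] Classical.propDecidable
set_option linter.unusedSectionVars false
set_option maxHeartbeats 1000000

variable {W : Type*}

theorem map_edge_mem (f : V ↪ W) {G : SimpleGraph V} {e : Sym2 V} (he : e ∈ G.edgeSet) :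
    Sym2.map f e ∈ (G.map f).edgeSet := by
  induction e using Sym2.ind with
  | _ a b =>
    rw [Sym2.map_pair_eq, SimpleGraph.mem_edgeSet] at *
    exact (SimpleGraph.map_adj f G _ _).2 ⟨a, b, he, rfl, rfl⟩

theorem map_edge_surj (f : V ↪ W) {G : SimpleGraph V} {e' : Sym2 W}
    (he : e' ∈ (G.map f).edgeSet) : ∃ e, e ∈ G.edgeSet ∧ Sym2.map f e = e' := by
  induction e' using Sym2.ind with
  | _ x y =>
    rw [SimpleGraph.mem_edgeSet, SimpleGraph.map_adj] at he
    obtain ⟨a, b, hab, rfl, rfl⟩ := he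
    exact ⟨s(a, b), hab, by rw [Sym2.map_pair_eq]⟩

theorem ecolorable_map_iff (f : V ↪ W) (G : SimpleGraph V) (n : ℕ) :
    EColorable (G.map f) n ↔ EColorable G n := by
  constructor
  · rintro ⟨C, hC1, hC2⟩
    refine ⟨fun e => C (Sym2.map f e), fun e he => hC1 _ (map_edge_mem f he), ?_⟩
    rintro e₁ h₁ e₂ h₂ hne ⟨v, hv1, hv2⟩
    refine hC2 _ (map_edge_mem f h₁) _ (map_edge_mem f h₂) ?_ ?_
    · intro h
      exact hne (Sym2.map.injective f.injective h)
    · exact ⟨f v, Sym2.mem_map.2 ⟨v, hv1, rfl⟩, Sym2.mem_map.2 ⟨v, hv2, rfl⟩⟩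
  · rintro ⟨c, hc1, hc2⟩
    classical
    refine ⟨fun e' => if h : ∃ e, e ∈ G.edgeSet ∧ Sym2.map f e = e' then c h.choose else 0,
      ?_, ?_⟩
    · intro e' he'
      dsimp only
      rw [dif_pos (map_edge_surj f he')]
      exact hc1 _ (map_edge_surj f he').choose_spec.1
    · intro e₁ h₁ e₂ h₂ hne hsh
      dsimp only
      rw [dif_pos (map_edge_surj f h₁), dif_pos (map_edge_surj f h₂)]
      obtain ⟨he₁G, hm₁⟩ := (map_edge_surj f h₁).choose_spec
      obtain ⟨he₂G, hm₂⟩ := (map_edge_surj f h₂).choose_spec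
      apply hc2 _ he₁G _ he₂G
      · intro h
        exact hne (by rw [← hm₁, ← hm₂, h])
      · obtain ⟨w, hw1, hw2⟩ := hsh
        rw [← hm₁] at hw1
        rw [← hm₂] at hw2
        obtain ⟨a₁, ha₁, hfa₁⟩ := Sym2.mem_map.1 hw1
        obtain ⟨a₂, ha₂, hfa₂⟩ := Sym2.mem_map.1 hw2
        have ha12 : a₁ = a₂ := f.injective (hfa₁.trans hfa₂.symm)
        exact ⟨a₁, ha₁, ha12 ▸ ha₂⟩

theorem chrom_map (f : V ↪ W) (G : SimpleGraph V) :
    edgeChromaticNumber (G.map f) = edgeChromaticNumber G := by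
  unfold edgeChromaticNumber
  congr 1
  ext n
  exact ecolorable_map_iff f G n

section fintype2
variable [Fintype V] [Fintype W] [DecidableEq V] [DecidableEq W]

theorem deg_map (f : V ↪ W) (G : SimpleGraph V) (v : V) :
    deg (G.map f) (f v) = deg G v := by
  rw [deg, deg]
  have h : (G.map f).neighborSet (f v) = f '' G.neighborSet v := by
    ext w
    simp only [SimpleGraph.mem_neighborSet, SimpleGraph.map_adj, Set.mem_image]
    constructor
    · rintro ⟨a, b, hab, ha, rfl⟩
      exact ⟨b, by rwa [f.injective ha] at hab, rfl⟩
    · rintro ⟨b, hb, rfl⟩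
      exact ⟨v, b, hb, rfl, rfl⟩
  rw [h, Set.ncard_image_of_injective _ f.injective]

theorem maxDeg_map (f : V ↪ W) (G : SimpleGraph V) :
    maxDeg (G.map f) = maxDeg G := by
  apply le_antisymm
  · apply maxDeg_le
    intro w
    by_cases h : ∃ v, f v = w
    · obtain ⟨v, rfl⟩ := h
      rw [deg_map]
      exact deg_le_maxDeg G v
    · have h2 : (G.map f).neighborSet w = ∅ := by
        ext z
        simp only [SimpleGraph.mem_neighborSet, SimpleGraph.map_adj,
          Set.mem_empty_iff_false, iff_false]
        rintro ⟨a, b, hab, ha, rfl⟩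
        exact h ⟨a, ha⟩
      rw [deg, h2, Set.ncard_empty]
      exact Nat.zero_le _
  · apply maxDeg_le
    intro v
    rw [← deg_map f G v]
    exact deg_le_maxDeg (G.map f) (f v)

end fintype2
end VizingAux


open VizingAux in
/-- If `G` is class 2, then for every `k` with `2 ≤ k ≤ Δ(G)`, `G` contains a
`k`-critical subgraph. -/
theorem class_two_contains_critical_subgraph [Fintype V] (G : SimpleGraph V)
    (hG : edgeChromaticNumber G ≠ maxDeg G) :
    ∀ k : ℕ, 2 ≤ k → k ≤ maxDeg G → ∃ H : G.Subgraph, IsKCritical H.coe k := by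
  classical
  intro k hk2 hkG
  have hΔχ : maxDeg G ≤ edgeChromaticNumber G := maxDeg_le_chrom G
  have hG' : maxDeg G < edgeChromaticNumber G := lt_of_le_of_ne hΔχ (Ne.symm hG)
  obtain ⟨K, hKG, hΔ, hχ, hsub⟩ := exists_critical_graph hk2 hkG hG'
  set HS : G.Subgraph :=
    { verts := K.support
      Adj := K.Adj
      adj_sub := fun h => hKG h
      edge_vert := fun {v w} h => K.mem_support.2 ⟨w, h⟩
      symm := K.symm } with hHS
  have hcoe_map : HS.coe.map (Function.Embedding.subtype (· ∈ K.support)) = K := by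
    ext x y
    simp only [SimpleGraph.map_adj, Function.Embedding.coe_subtype,
      SimpleGraph.Subgraph.coe_adj]
    constructor
    · rintro ⟨-, a, b, hab, rfl, rfl⟩
      exact hab
    · intro h
      exact ⟨h.ne, ⟨x, K.mem_support.2 ⟨y, h⟩⟩, ⟨y, K.mem_support.2 ⟨x, h.symm⟩⟩, h, rfl, rfl⟩
  have hχcoe : edgeChromaticNumber HS.coe = k + 1 := by
    rw [← chrom_map (Function.Embedding.subtype (· ∈ K.support)) HS.coe, hcoe_map, hχ]
  have hΔcoe : maxDeg HS.coe = k := by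
    rw [← maxDeg_map (Function.Embedding.subtype (· ∈ K.support)) HS.coe, hcoe_map, hΔ]
  refine ⟨HS, ⟨⟨?_, ?_⟩, hΔcoe⟩⟩
  · rw [hχcoe, hΔcoe]
    omega
  · intro H' hH'
    set emb : ↥H'.verts ↪ V :=
      (Function.Embedding.subtype _).trans (Function.Embedding.subtype _) with hemb
    have hLK : H'.coe.map emb ≤ K := by
      intro x y hxy
      rw [SimpleGraph.map_adj] at hxy
      obtain ⟨a, b, hab, rfl, rfl⟩ := hxy
      exact H'.adj_sub hab
    have hLne : H'.coe.map emb ≠ K := by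
      intro hEq
      apply hH'
      have hAdj : ∀ a b : ↥HS.verts, HS.coe.Adj a b → H'.Adj a b := by
        intro a b hab
        have hK : (H'.coe.map emb).Adj ↑a ↑b := by
          rw [hEq]
          exact hab
        rw [SimpleGraph.map_adj] at hK
        obtain ⟨x, y, hxy, hx, hy⟩ := hK
        have hx' : (x : ↥HS.verts) = a := Subtype.val_injective hx
        have hy' : (y : ↥HS.verts) = b := Subtype.val_injective hy
        rw [← hx', ← hy']
        exact hxy
      apply SimpleGraph.Subgraph.ext
      · rw [SimpleGraph.Subgraph.verts_top]
        apply Set.eq_univ_of_forall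
        intro a
        obtain ⟨w, hw⟩ := K.mem_support.1 a.2
        have hadj : HS.coe.Adj a ⟨w, K.mem_support.2 ⟨↑a, hw.symm⟩⟩ := hw
        exact H'.edge_vert (hAdj _ _ hadj)
      · funext a b
        apply propext
        constructor
        · intro h
          exact (SimpleGraph.Subgraph.top_adj).2 (H'.adj_sub h)
        · intro h
          exact hAdj a b ((SimpleGraph.Subgraph.top_adj).1 h)
    have hχL : edgeChromaticNumber H'.coe ≤ k := by
      rw [← chrom_map emb H'.coe]
      exact hsub _ hLK hLne
    rw [hχcoe]
    omega
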